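/- (Rank-one structure of the adjugate / eigenvector formula.) Let 𝕜 be a field, n ≥ 2, and let A be an n×n matrix over 𝕜 whose rank equals n−1. Then there exist nonzero vectors ψ, φ ∈ 𝕜^n with A·ψ = 0 (ψ spans the kernel of A) and φᵀ·A = 0 (φ spans the left kernel of A) such that adjugate(A) = ψ·φᵀ, i.e. (adjugate A)_{ij} = ψ_i·φ_j for all i,j. In particular adjugate(A) has rank one. -/

import Mathlib

open scoped Matrix


/-- Rank-one structure of the adjugate: if `A` is an `n×n` matrix (`n ≥ 2`) over a field
with `rank A = n − 1`, then there are nonzero vectors `ψ` (in the kernel of `A`) and `φ`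
(in the left kernel of `A`) with `adjugate(A) = ψ·φᵀ`; in particular `adjugate(A)` has
rank one. -/
theorem adjugate_rank_one_of_rank_sub_one {𝕜 : Type*} [Field 𝕜] {n : ℕ} (hn : 2 ≤ n)
    (A : Matrix (Fin n) (Fin n) 𝕜) (hrank : A.rank = n - 1) :
    ∃ ψ φ : Fin n → 𝕜, ψ ≠ 0 ∧ φ ≠ 0 ∧ A.mulVec ψ = 0 ∧ A.vecMul φ = 0 ∧
      (∀ i j, A.adjugate i j = ψ i * φ j) ∧ A.adjugate.rank = 1 := by
  classical
  -- A is singular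
  have hdet : A.det = 0 := by
    by_contra h
    have hu : IsUnit A := (Matrix.isUnit_iff_isUnit_det A).mpr (isUnit_iff_ne_zero.mpr h)
    have := A.rank_of_isUnit hu
    rw [hrank, Fintype.card_fin] at this
    omega
  obtain ⟨ψ, hψ0, hψA⟩ := (Matrix.exists_mulVec_eq_zero_iff).mpr hdet
  obtain ⟨c, hc0, hcA⟩ := (Matrix.exists_vecMul_eq_zero_iff).mpr hdet
  -- the kernel of A is the span of ψ
  have hkerdim : Module.finrank 𝕜 (LinearMap.ker A.mulVecLin) = 1 := by
    have h1 := LinearMap.finrank_range_add_finrank_ker A.mulVecLin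
    have h2 : A.rank = Module.finrank 𝕜 (LinearMap.range A.mulVecLin) := rfl
    rw [← h2, hrank, Module.finrank_pi] at h1
    simp only [Fintype.card_fin] at h1
    omega
  have hψker : ψ ∈ LinearMap.ker A.mulVecLin := by
    rw [LinearMap.mem_ker, Matrix.mulVecLin_apply, hψA]
  have hspan : Submodule.span 𝕜 {ψ} = LinearMap.ker A.mulVecLin := by
    apply Submodule.eq_of_le_of_finrank_eq
    · rwa [Submodule.span_singleton_le_iff_mem]
    · rw [finrank_span_singleton hψ0, hkerdim]
  have hmem : ∀ v : Fin n → 𝕜, A.mulVec v = 0 → ∃ t : 𝕜, v = t • ψ := by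
    intro v hv
    have : v ∈ Submodule.span 𝕜 {ψ} := by
      rw [hspan, LinearMap.mem_ker, Matrix.mulVecLin_apply, hv]
    obtain ⟨t, ht⟩ := Submodule.mem_span_singleton.mp this
    exact ⟨t, ht.symm⟩
  obtain ⟨i, hi⟩ : ∃ i, ψ i ≠ 0 := Function.ne_iff.mp hψ0
  obtain ⟨j, hj⟩ : ∃ j, c j ≠ 0 := Function.ne_iff.mp hc0
  -- key: the (i,j) cofactor is nonzero
  have hBdet : (A.updateRow j (Pi.single i 1)).det ≠ 0 := by
    intro hB0
    obtain ⟨v, hv0, hvB⟩ := (Matrix.exists_mulVec_eq_zero_iff).mpr hB0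
    have hvk : ∀ k, k ≠ j → A k ⬝ᵥ v = 0 := by
      intro k hk
      have := congrFun hvB k
      rwa [Matrix.mulVec, Matrix.updateRow_ne hk] at this
    have hvi : v i = 0 := by
      have := congrFun hvB j
      rw [Matrix.mulVec, Matrix.updateRow_self, single_dotProduct, one_mul] at this
      exact this
    have hvj : A j ⬝ᵥ v = 0 := by
      have h1 : c ⬝ᵥ A.mulVec v = 0 := by
        rw [Matrix.dotProduct_mulVec, hcA, zero_dotProduct]
      have h2 : c ⬝ᵥ A.mulVec v = c j * (A j ⬝ᵥ v) := by
        rw [dotProduct]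
        apply Finset.sum_eq_single
        · intro k _ hk
          rw [show A.mulVec v k = A k ⬝ᵥ v from rfl, hvk k hk, mul_zero]
        · intro h; exact absurd (Finset.mem_univ j) h
      rw [h2] at h1
      exact (mul_eq_zero.mp h1).resolve_left hj
    have hAv : A.mulVec v = 0 := by
      funext k
      by_cases hk : k = j
      · subst hk; exact hvj
      · exact hvk k hk
    obtain ⟨t, ht⟩ := hmem v hAv
    have : t = 0 := by
      have := congrFun ht i
      rw [hvi, Pi.smul_apply, smul_eq_mul] at this
      exact (mul_eq_zero.mp this.symm).resolve_right hi
    rw [this, zero_smul] at ht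
    exact hv0 ht
  have hadj : A.adjugate i j ≠ 0 := by rwa [Matrix.adjugate_apply]
  -- columns of the adjugate lie in the kernel of A
  have hcol : ∀ l, A.mulVec (fun k => A.adjugate k l) = 0 := by
    intro l
    funext k
    have := congrFun (congrFun (Matrix.mul_adjugate A) k) l
    rw [hdet, zero_smul] at this
    simpa [Matrix.mulVec, dotProduct, Matrix.mul_apply] using this
  set φ : Fin n → 𝕜 := fun l => (ψ i)⁻¹ * A.adjugate i l with hφdef
  have hprod : ∀ k l, A.adjugate k l = ψ k * φ l := by
    intro k l
    obtain ⟨t, ht⟩ := hmem _ (hcol l)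
    have hki := congrFun ht i
    have hkk := congrFun ht k
    simp only [Pi.smul_apply, smul_eq_mul] at hki hkk
    have : φ l = t := by
      rw [hφdef]
      field_simp [hki]
      rw [hki]; ring
    rw [this, hkk]
    ring
  have hφ0 : φ ≠ 0 := by
    intro h
    apply hadj
    rw [hprod i j, congrFun h j, Pi.zero_apply, mul_zero]
  have hφA : A.vecMul φ = 0 := by
    funext l
    have h2 := congrFun (congrFun (Matrix.adjugate_mul A) i) l
    rw [hdet, zero_smul] at h2
    simp only [Matrix.zero_apply] at h2
    have h3 : (A.adjugate * A) i l = ∑ k, ψ i * φ k * A k l := by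
      rw [Matrix.mul_apply]
      exact Finset.sum_congr rfl fun k _ => by rw [hprod i k]
    rw [h3] at h2
    have h4 : ψ i * ∑ k, φ k * A k l = 0 := by
      rw [Finset.mul_sum]
      rw [← h2]
      exact Finset.sum_congr rfl fun k _ => by ring
    have h5 : ∑ k, φ k * A k l = 0 := (mul_eq_zero.mp h4).resolve_left hi
    simpa [Matrix.vecMul, dotProduct] using h5
  -- rank of the adjugate is 1
  have hle : A.adjugate.rank ≤ 1 := by
    have heq : A.adjugate = Matrix.vecMulVec ψ φ := by
      ext k l
      rw [Matrix.vecMulVec_apply, hprod]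
    rw [heq, Matrix.vecMulVec_eq (Fin 1)]
    calc (Matrix.replicateCol (Fin 1) ψ * Matrix.replicateRow (Fin 1) φ).rank
        ≤ (Matrix.replicateCol (Fin 1) ψ).rank := Matrix.rank_mul_le_left _ _
      _ ≤ Fintype.card (Fin 1) := Matrix.rank_le_card_width _
      _ = 1 := by simp
  have hne : A.adjugate.rank ≠ 0 := by
    intro h0
    have hbot : LinearMap.range A.adjugate.mulVecLin = ⊥ :=
      Submodule.finrank_eq_zero.mp h0
    have hz : A.adjugate.mulVec (Pi.single j 1) = 0 := by
      have := LinearMap.range_eq_bot.mp hbot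
      rw [← Matrix.mulVecLin_apply, this, LinearMap.zero_apply]
    have := congrFun hz i
    rw [Matrix.mulVec, dotProduct_single, mul_one] at this
    exact hadj this
  exact ⟨ψ, φ, hψ0, hφ0, hψA, hφA, hprod, by omega⟩
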